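/- Let B be a bounded self-adjoint operator and Π an orthogonal projection on a separable Hilbert space with ‖ΠB(1−Π)‖_tr ≤ C. Define U_t(B) = e^{it ΠBΠ} − Π e^{itB} Π. Then for every t ≥ 0, ‖Π U_t(B)‖_tr ≤ C t. -/

import Mathlib

open scoped InnerProductSpace ENNReal

/-- The trace norm (Schatten-1 norm) of an operator, defined through its classical
variational characterization: `‖T‖₁ = sup ∑ᵢ |⟪eᵢ, T fᵢ⟫|` over finite orthonormal
families `(eᵢ)`, `(fᵢ)`.  It takes the value `∞` iff `T` is not trace class. -/
noncomputable def traceNorm {H : Type*} [NormedAddCommGroup H] [InnerProductSpace ℂ H]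
    (T : H →L[ℂ] H) : ℝ≥0∞ :=
  ⨆ (n : ℕ) (e : Fin n → H) (f : Fin n → H) (_ : Orthonormal ℂ e) (_ : Orthonormal ℂ f),
    ENNReal.ofReal (∑ i, ‖⟪e i, T (f i)⟫_ℂ‖)

namespace TraceNormAux

open NormedSpace

variable {H : Type*} [NormedAddCommGroup H] [InnerProductSpace ℂ H] [CompleteSpace H]

lemma inner_map_map {U : H →L[ℂ] H} (h : star U * U = 1) (x y : H) :
    ⟪U x, U y⟫_ℂ = ⟪x, y⟫_ℂ := by
  have h1 : ContinuousLinearMap.adjoint U (U y) = y := by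
    have h2 : (star U * U) y = (1 : H →L[ℂ] H) y := by rw [h]
    simpa [ContinuousLinearMap.mul_apply, ContinuousLinearMap.star_eq_adjoint] using h2
  rw [← ContinuousLinearMap.adjoint_inner_right U x (U y), h1]

lemma orthonormal_map {U : H →L[ℂ] H} (h : star U * U = 1) {n : ℕ} {e : Fin n → H}
    (he : Orthonormal ℂ e) : Orthonormal ℂ (fun i => U (e i)) := by
  classical
  rw [orthonormal_iff_ite] at he ⊢
  intro i j
  rw [inner_map_map h]
  exact he i j

lemma exp_skew_add (x : H →L[ℂ] H) (s s' : ℝ) :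
    exp (s • x) * exp (s' • x) = exp ((s + s') • x) := by
  let +nondep : NormedAlgebra ℚ (H →L[ℂ] H) := .restrictScalars ℚ ℂ _
  rw [add_smul, exp_add_of_commute (((Commute.refl x).smul_left s).smul_right s')]

lemma exp_skew_star {x : H →L[ℂ] H} (hx : star x = -x) (s : ℝ) :
    star (exp (s • x)) = exp ((-s) • x) := by
  have h3 : star ((s : ℝ) • x) = (-s : ℝ) • x := by
    rw [← Complex.coe_smul, star_smul, hx]
    simp [← Complex.coe_smul]
  rw [star_exp, h3]

lemma exp_skew_star_mul {x : H →L[ℂ] H} (hx : star x = -x) (s : ℝ) :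
    star (exp (s • x)) * exp (s • x) = 1 := by
  rw [exp_skew_star hx, exp_skew_add, neg_add_cancel, zero_smul, exp_zero]

lemma orthonormal_exp {x : H →L[ℂ] H} (hx : star x = -x) (s : ℝ) {n : ℕ} {e : Fin n → H}
    (he : Orthonormal ℂ e) : Orthonormal ℂ (fun i => exp (s • x) (e i)) :=
  orthonormal_map (exp_skew_star_mul hx s) he

lemma sum_le_of_traceNorm_le {T : H →L[ℂ] H} {C : ℝ} (hC : 0 ≤ C)
    (h : traceNorm T ≤ ENNReal.ofReal C) {n : ℕ} {e f : Fin n → H}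
    (he : Orthonormal ℂ e) (hf : Orthonormal ℂ f) :
    ∑ i, ‖⟪e i, T (f i)⟫_ℂ‖ ≤ C := by
  have h1 : ENNReal.ofReal (∑ i, ‖⟪e i, T (f i)⟫_ℂ‖) ≤ traceNorm T :=
    le_iSup_of_le n <| le_iSup_of_le e <| le_iSup_of_le f <| le_iSup_of_le he <|
      le_iSup_of_le hf le_rfl
  exact (ENNReal.ofReal_le_ofReal_iff hC).mp (h1.trans h)

lemma traceNorm_le_of_forall {T : H →L[ℂ] H} {C : ℝ}
    (h : ∀ (n : ℕ) (e f : Fin n → H), Orthonormal ℂ e → Orthonormal ℂ f →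
      ∑ i, ‖⟪e i, T (f i)⟫_ℂ‖ ≤ C) : traceNorm T ≤ ENNReal.ofReal C := by
  refine iSup_le fun n => iSup_le fun e => iSup_le fun f => iSup_le fun he => iSup_le fun hf => ?_
  exact ENNReal.ofReal_le_ofReal (h n e f he hf)

end TraceNormAux

set_option maxHeartbeats 2000000 in
open TraceNormAux NormedSpace in
/-- Let `B` be bounded self-adjoint and `P` an orthogonal projection with
`‖P B (1−P)‖_tr ≤ C`.  With `U_t(B) = e^{it P B P} − P e^{itB} P`, one has
`‖P U_t(B)‖_tr ≤ C t` for every `t ≥ 0`. -/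
theorem traceNorm_proj_U_le {H : Type*} [NormedAddCommGroup H] [InnerProductSpace ℂ H]
    [CompleteSpace H] [TopologicalSpace.SeparableSpace H]
    (B P : H →L[ℂ] H) (hB : IsSelfAdjoint B)
    (hP : IsIdempotentElem P) (hPsa : IsSelfAdjoint P)
    (C : ℝ) (hC : 0 ≤ C)
    (hblock : traceNorm (P * B * (1 - P)) ≤ ENNReal.ofReal C)
    (t : ℝ) (ht : 0 ≤ t) :
    traceNorm (P * (NormedSpace.exp ((t : ℂ) • (Complex.I • (P * B * P)))
        - P * NormedSpace.exp ((t : ℂ) • (Complex.I • B)) * P))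
      ≤ ENNReal.ofReal (C * t) := by
  classical
  set x : H →L[ℂ] H := Complex.I • (P * B * P) with hxdef
  set y : H →L[ℂ] H := Complex.I • B with hydef
  set K : H →L[ℂ] H := P * B * (1 - P) with hKdef
  have hx : star x = -x := by
    simp [hxdef, star_smul, Complex.conj_I, star_mul, hPsa.star_eq, hB.star_eq, mul_assoc,
      neg_smul]
  have hy : star y = -y := by
    simp [hydef, star_smul, Complex.conj_I, hB.star_eq, neg_smul]
  set uA : ℝ → (H →L[ℂ] H) := fun s => exp (s • x) with huA
  set uB : ℝ → (H →L[ℂ] H) := fun s => exp (s • y) with huB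
  have hgoalA : NormedSpace.exp ((t : ℂ) • (Complex.I • (P * B * P))) = uA t := by
    rw [huA, Complex.coe_smul]
  have hgoalB : NormedSpace.exp ((t : ℂ) • (Complex.I • B)) = uB t := by
    rw [huB, Complex.coe_smul]
  rw [hgoalA, hgoalB]
  -- continuity facts
  let +nondep : NormedAlgebra ℚ (H →L[ℂ] H) := .restrictScalars ℚ ℂ _
  have contuA : Continuous uA := exp_continuous.comp (continuous_id.smul continuous_const)
  have contuB : Continuous uB := exp_continuous.comp (continuous_id.smul continuous_const)
  set G : ℝ → (H →L[ℂ] H) := fun s => Complex.I • (uA (-s) * K * uB s) with hGdef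
  have contG : Continuous G :=
    (((contuA.comp continuous_neg).mul (continuous_const (y := K))).mul contuB).const_smul
      Complex.I
  have hint : IntervalIntegrable G MeasureTheory.volume 0 t := contG.intervalIntegrable _ _
  -- Duhamel derivative
  have hW : ∀ s : ℝ, HasDerivAt (fun r => uA (-r) * P * uB r) (G s) s := by
    intro s
    have hun : HasDerivAt (fun r : ℝ => uA (-r)) (-(x * uA (-s))) s := by
      have h1 := (hasDerivAt_exp_smul_const' (𝕂 := ℝ) x (-s)).scomp s (hasDerivAt_neg s)
      simpa [huA, Function.comp_def] using h1
    have hv : HasDerivAt uB (y * uB s) s := hasDerivAt_exp_smul_const' y s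
    have h1 := (hun.mul_const P).mul hv
    refine h1.congr_deriv (Eq.symm ?_)
    -- algebra: G s = -(x * uA (-s)) * P * uB s + uA (-s) * P * (y * uB s)
    have hcomm : x * uA (-s) = uA (-s) * x :=
      (((Commute.refl x).smul_right (-s)).exp_right).eq
    have hxP : x * P = Complex.I • (P * B * P) := by
      rw [hxdef, smul_mul_assoc, mul_assoc, hP.eq]
    have hPy : P * y = Complex.I • (P * B) := by
      rw [hydef, mul_smul_comm]
    have hKeq : Complex.I • K = Complex.I • (P * B) - Complex.I • (P * B * P) := by
      rw [hKdef, mul_sub, mul_one, smul_sub]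
    calc G s = uA (-s) * (Complex.I • K) * uB s := by
          rw [hGdef]; simp [smul_mul_assoc, mul_smul_comm]
      _ = uA (-s) * (Complex.I • (P * B)) * uB s
            - uA (-s) * (Complex.I • (P * B * P)) * uB s := by
          rw [hKeq, mul_sub, sub_mul]
      _ = -(x * uA (-s)) * P * uB s + uA (-s) * P * (y * uB s) := by
          have e1 : -(x * uA (-s)) * P * uB s
              = -(uA (-s) * (Complex.I • (P * B * P)) * uB s) := by
            rw [neg_mul, neg_mul, hcomm, mul_assoc (uA (-s)) x P, hxP]
          have e2 : uA (-s) * P * (y * uB s) = uA (-s) * (Complex.I • (P * B)) * uB s := by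
            rw [mul_assoc (uA (-s)) P (y * uB s), ← mul_assoc P y (uB s), hPy,
              ← mul_assoc]
          rw [e1, e2, neg_add_eq_sub]
  have hFTC : (∫ s in (0:ℝ)..t, G s) = uA (-t) * P * uB t - P := by
    have h2 := intervalIntegral.integral_eq_sub_of_hasDerivAt
      (f := fun r => uA (-r) * P * uB r) (f' := G) (fun s _ => hW s) hint
    simpa [huA, huB, exp_zero] using h2
  set J : H →L[ℂ] H := ∫ s in (0:ℝ)..t, G s with hJdef
  have hmulA : ∀ s s' : ℝ, uA s * uA s' = uA (s + s') := fun s s' => exp_skew_add x s s'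
  have h0 : uA t * uA (-t) = 1 := by
    rw [hmulA, add_neg_cancel]
    show exp ((0:ℝ) • x) = 1
    rw [zero_smul, exp_zero]
  have h3 : P + J = uA (-t) * P * uB t := by rw [hFTC]; abel
  have hPuB : P * uB t = uA t * P + uA t * J := by
    calc P * uB t = (uA t * uA (-t)) * (P * uB t) := by rw [h0, one_mul]
      _ = uA t * (uA (-t) * P * uB t) := by
          rw [mul_assoc, mul_assoc (uA (-t)) P (uB t)]
      _ = uA t * (P + J) := by rw [← h3]
      _ = uA t * P + uA t * J := mul_add _ _ _
  have hcommP : P * uA t = uA t * P := by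
    have hPx : Commute P x := by
      have h1 : P * (P * B * P) = P * B * P := by rw [← mul_assoc, ← mul_assoc, hP.eq]
      have h2 : P * B * P * P = P * B * P := by rw [mul_assoc (P * B) P P, hP.eq]
      rw [Commute, SemiconjBy, hxdef, mul_smul_comm, smul_mul_assoc, h1, h2]
    exact ((hPx.smul_right t).exp_right).eq
  have hT0 : P * (uA t - P * uB t * P) = -((uA t * J) * P) := by
    rw [mul_sub, hcommP, ← mul_assoc, ← mul_assoc, hP.eq, hPuB, add_mul,
      mul_assoc (uA t) P P, hP.eq]
    abel
  -- key integral bound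
  have key : ∀ (n : ℕ) (e f : Fin n → H), Orthonormal ℂ e → Orthonormal ℂ f →
      ∑ i, ‖⟪e i, (uA t * J) (f i)⟫_ℂ‖ ≤ C * t := by
    intro n e f he hf
    set e' : Fin n → H := fun i => uA (-t) (e i) with he'def
    have he'on : Orthonormal ℂ e' := orthonormal_exp hx (-t) he
    have hadjA : ∀ s : ℝ, ContinuousLinearMap.adjoint (uA s) = uA (-s) := by
      intro s
      rw [← ContinuousLinearMap.star_eq_adjoint]
      exact exp_skew_star hx s
    have hstep1 : ∀ i, ⟪e i, (uA t * J) (f i)⟫_ℂ = ⟪e' i, J (f i)⟫_ℂ := by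
      intro i
      rw [ContinuousLinearMap.mul_apply,
        ← ContinuousLinearMap.adjoint_inner_left (uA t) (J (f i)) (e i), hadjA t]
    have hGapp : ∀ v : H, Continuous fun s => (G s) v := fun v =>
      contG.clm_apply continuous_const
    have hinner : ∀ i, ⟪e' i, J (f i)⟫_ℂ = ∫ s in (0:ℝ)..t, ⟪e' i, (G s) (f i)⟫_ℂ := by
      intro i
      rw [hJdef, ContinuousLinearMap.intervalIntegral_apply hint (f i)]
      have h7 := (innerSL ℂ (e' i)).intervalIntegral_comp_comm
        ((hGapp (f i)).intervalIntegrable (μ := MeasureTheory.volume) (0:ℝ) t)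
      simpa using h7.symm
    have hpt : ∀ s : ℝ, ∑ i, ‖⟪e' i, (G s) (f i)⟫_ℂ‖ ≤ C := by
      intro s
      have hcalc : ∀ i, ‖⟪e' i, (G s) (f i)⟫_ℂ‖ = ‖⟪uA s (e' i), K ((uB s) (f i))⟫_ℂ‖ := by
        intro i
        have h5 : (G s) (f i) = Complex.I • (uA (-s)) (K ((uB s) (f i))) := by
          simp [hGdef, ContinuousLinearMap.smul_apply, ContinuousLinearMap.mul_apply]
        rw [h5, inner_smul_right,
          ← ContinuousLinearMap.adjoint_inner_left (uA (-s)) (K ((uB s) (f i))) (e' i),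
          hadjA (-s), neg_neg]
        simp
      calc ∑ i, ‖⟪e' i, (G s) (f i)⟫_ℂ‖
          = ∑ i, ‖⟪uA s (e' i), K ((uB s) (f i))⟫_ℂ‖ :=
            Finset.sum_congr rfl fun i _ => hcalc i
        _ ≤ C := sum_le_of_traceNorm_le (T := K) hC hblock
            (e := fun i => uA s (e' i)) (f := fun i => uB s (f i))
            (orthonormal_exp hx s he'on) (orthonormal_exp hy s hf)
    have hcont2 : ∀ i, Continuous fun s => ⟪e' i, (G s) (f i)⟫_ℂ := fun i =>
      Continuous.inner continuous_const (hGapp (f i))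
    calc ∑ i, ‖⟪e i, (uA t * J) (f i)⟫_ℂ‖
        = ∑ i, ‖∫ s in (0:ℝ)..t, ⟪e' i, (G s) (f i)⟫_ℂ‖ := by
          refine Finset.sum_congr rfl fun i _ => ?_
          rw [hstep1 i, hinner i]
      _ ≤ ∑ i, ∫ s in (0:ℝ)..t, ‖⟪e' i, (G s) (f i)⟫_ℂ‖ :=
          Finset.sum_le_sum fun i _ => intervalIntegral.norm_integral_le_integral_norm ht
      _ = ∫ s in (0:ℝ)..t, ∑ i, ‖⟪e' i, (G s) (f i)⟫_ℂ‖ :=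
          (intervalIntegral.integral_finset_sum fun i _ =>
            ((hcont2 i).norm.intervalIntegrable (μ := MeasureTheory.volume) 0 t)).symm
      _ ≤ ∫ s in (0:ℝ)..t, C := by
          refine intervalIntegral.integral_mono_on ht ?_ intervalIntegrable_const
            fun s _ => hpt s
          exact (continuous_finset_sum _ fun i _ => (hcont2 i).norm).intervalIntegrable _ _
      _ = C * t := by simp [mul_comm]
  -- conclusion via the reflection R = 2P - 1
  rw [hT0]
  refine traceNorm_le_of_forall fun n e f he hf => ?_
  set R : H →L[ℂ] H := (2:ℂ) • P - 1 with hRdef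
  have hRsa : star R = R := by
    simp [hRdef, star_smul, hPsa.star_eq]
  have hRR : star R * R = 1 := by
    rw [hRsa, hRdef]
    simp only [sub_mul, mul_sub, smul_mul_assoc, mul_smul_comm, hP.eq, mul_one, one_mul,
      smul_smul]
    module
  have hPapp : ∀ z : H, P z = ((2:ℂ)⁻¹) • (z + R z) := by
    intro z
    rw [hRdef]
    simp only [ContinuousLinearMap.sub_apply, ContinuousLinearMap.smul_apply,
      ContinuousLinearMap.one_apply]
    module
  have hfR : Orthonormal ℂ (fun i => R (f i)) := orthonormal_map hRR hf
  have hsum1 := key n e f he hf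
  have hsum2 := key n e (fun i => R (f i)) he hfR
  have hterm : ∀ i, ‖⟪e i, (-(uA t * J * P)) (f i)⟫_ℂ‖ ≤
      2⁻¹ * ‖⟪e i, (uA t * J) (f i)⟫_ℂ‖ + 2⁻¹ * ‖⟪e i, (uA t * J) (R (f i))⟫_ℂ‖ := by
    intro i
    have h6 : (-(uA t * J * P)) (f i) = -((uA t * J) (P (f i))) := by
      simp [ContinuousLinearMap.neg_apply, ContinuousLinearMap.mul_apply]
    rw [h6, inner_neg_right, norm_neg, hPapp (f i), map_smul, map_add, inner_smul_right,
      inner_add_right, norm_mul]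
    have h8 : ‖(2⁻¹ : ℂ)‖ = 2⁻¹ := by norm_num
    rw [h8]
    calc 2⁻¹ * ‖⟪e i, (uA t * J) (f i)⟫_ℂ + ⟪e i, (uA t * J) (R (f i))⟫_ℂ‖
        ≤ 2⁻¹ * (‖⟪e i, (uA t * J) (f i)⟫_ℂ‖ + ‖⟪e i, (uA t * J) (R (f i))⟫_ℂ‖) := by
          have := norm_add_le (⟪e i, (uA t * J) (f i)⟫_ℂ) (⟪e i, (uA t * J) (R (f i))⟫_ℂ)
          nlinarith [this]
      _ = 2⁻¹ * ‖⟪e i, (uA t * J) (f i)⟫_ℂ‖ + 2⁻¹ * ‖⟪e i, (uA t * J) (R (f i))⟫_ℂ‖ := by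
          ring
  calc ∑ i, ‖⟪e i, (-(uA t * J * P)) (f i)⟫_ℂ‖
      ≤ ∑ i, (2⁻¹ * ‖⟪e i, (uA t * J) (f i)⟫_ℂ‖
          + 2⁻¹ * ‖⟪e i, (uA t * J) (R (f i))⟫_ℂ‖) :=
        Finset.sum_le_sum fun i _ => hterm i
    _ = 2⁻¹ * (∑ i, ‖⟪e i, (uA t * J) (f i)⟫_ℂ‖)
        + 2⁻¹ * (∑ i, ‖⟪e i, (uA t * J) (R (f i))⟫_ℂ‖) := by
        rw [Finset.sum_add_distrib, ← Finset.mul_sum, ← Finset.mul_sum]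
    _ ≤ 2⁻¹ * (C * t) + 2⁻¹ * (C * t) := by
        have h9 : (0:ℝ) ≤ 2⁻¹ := by norm_num
        exact add_le_add (mul_le_mul_of_nonneg_left hsum1 h9)
          (mul_le_mul_of_nonneg_left hsum2 h9)
    _ = C * t := by ring
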